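/- Suppose sprank(A^S) = n. Let OPT ⊆ {1,…,m} be a subset of maximum cardinality such that ν(S_OPT) = n−1 (i.e., the induced bipartite graph on the rows OPT has a maximum matching of size n−1). Then spcospark(A^S) = m − |OPT|. -/

import Mathlib

open Matrix MeasureTheory

/-- `A` has sparsity pattern `S`: the nonzero entries of `A` are exactly those indexed by `S`. -/
def HasPattern {m n : ℕ} (S : Finset (Fin m × Fin n)) (A : Matrix (Fin m) (Fin n) ℝ) : Prop :=
  ∀ i j, A i j ≠ 0 ↔ (i, j) ∈ S

/-- Generic rank of the class of matrices with sparsity pattern `S`. -/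
noncomputable def sprank {m n : ℕ} (S : Finset (Fin m × Fin n)) : ℕ :=
  sSup {r : ℕ | ∃ A : Matrix (Fin m) (Fin n) ℝ, HasPattern S A ∧ A.rank = r}

/-- The sparsity pattern restricted to the rows in `T` (rows outside `T` become zero). -/
def patternOn {m n : ℕ} (S : Finset (Fin m × Fin n)) (T : Finset (Fin m)) :
    Finset (Fin m × Fin n) :=
  S.filter (fun p => p.1 ∈ T)

/-- A matching of a sparsity pattern: any two distinct pairs differ in both coordinates. -/
def IsMatching {m n : ℕ} (M : Finset (Fin m × Fin n)) : Prop :=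
  ∀ p ∈ M, ∀ q ∈ M, p ≠ q → p.1 ≠ q.1 ∧ p.2 ≠ q.2

/-- `nu S` : maximum cardinality of a matching contained in `S`. -/
noncomputable def nu {m n : ℕ} (S : Finset (Fin m × Fin n)) : ℕ :=
  sSup {k : ℕ | ∃ M ⊆ S, IsMatching M ∧ M.card = k}

/-- ℓ₀ "norm": number of nonzero entries of a vector. -/
noncomputable def l0 {m : ℕ} (y : Fin m → ℝ) : ℕ :=
  (Finset.univ.filter (fun i => y i ≠ 0)).card

/-- `cospark A` : minimum of `‖A x‖₀` over nonzero `x`. -/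
noncomputable def cospark {m n : ℕ} (A : Matrix (Fin m) (Fin n) ℝ) : ℕ :=
  sInf {k : ℕ | ∃ x : Fin n → ℝ, x ≠ 0 ∧ l0 (A.mulVec x) = k}

/-- Generic cospark of the class of matrices with sparsity pattern `S`. -/
noncomputable def spcospark {m n : ℕ} (S : Finset (Fin m × Fin n)) : ℕ :=
  sSup {k : ℕ | ∃ A : Matrix (Fin m) (Fin n) ℝ, HasPattern S A ∧ cospark A = k}

/-- The row-submatrix `A_T`, realized as `A` with the rows outside `T` zeroed out. -/
noncomputable def rowRestrict {m n : ℕ} (A : Matrix (Fin m) (Fin n) ℝ) (T : Finset (Fin m)) :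
    Matrix (Fin m) (Fin n) ℝ :=
  Matrix.of fun i j => if i ∈ T then A i j else 0

/-- `X_W` : the rows of the pattern `S` all of whose nonzero positions lie in the columns `W`. -/
def rowsIn {m n : ℕ} (S : Finset (Fin m × Fin n)) (W : Finset (Fin n)) : Finset (Fin m) :=
  Finset.univ.filter (fun i => ∀ j, (i, j) ∈ S → j ∈ W)

section NuAPI
variable {m n : ℕ}

lemma nu_bddAbove (S : Finset (Fin m × Fin n)) :
    BddAbove {k : ℕ | ∃ M ⊆ S, IsMatching M ∧ M.card = k} := by
  refine ⟨S.card, ?_⟩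
  rintro k ⟨M, hMS, -, rfl⟩
  exact Finset.card_le_card hMS

lemma nu_set_nonempty (S : Finset (Fin m × Fin n)) :
    {k : ℕ | ∃ M ⊆ S, IsMatching M ∧ M.card = k}.Nonempty :=
  ⟨0, ∅, Finset.empty_subset _, fun p hp => absurd hp (by simp), Finset.card_empty⟩

lemma nu_spec (S : Finset (Fin m × Fin n)) :
    ∃ M ⊆ S, IsMatching M ∧ M.card = nu S :=
  Nat.sSup_mem (nu_set_nonempty S) (nu_bddAbove S)

lemma le_nu {S M : Finset (Fin m × Fin n)} (hMS : M ⊆ S) (hM : IsMatching M) :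
    M.card ≤ nu S :=
  le_csSup (nu_bddAbove S) ⟨M, hMS, hM, rfl⟩

lemma nu_mono {S S' : Finset (Fin m × Fin n)} (h : S ⊆ S') : nu S ≤ nu S' := by
  obtain ⟨M, hMS, hM, hcard⟩ := nu_spec S
  rw [← hcard]
  exact le_nu (hMS.trans h) hM

lemma nu_insert_row (S : Finset (Fin m × Fin n)) (T : Finset (Fin m)) (a : Fin m) :
    nu (patternOn S (insert a T)) ≤ nu (patternOn S T) + 1 := by
  obtain ⟨M, hMS, hM, hcard⟩ := nu_spec (patternOn S (insert a T))
  rw [← hcard]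
  set M' := M.filter (fun p => p.1 ≠ a) with hM'
  have hM'sub : M' ⊆ patternOn S T := by
    intro p hp
    rw [hM', Finset.mem_filter] at hp
    have := hMS hp.1
    rw [patternOn, Finset.mem_filter] at this ⊢
    refine ⟨this.1, ?_⟩
    rcases Finset.mem_insert.1 this.2 with h | h
    · exact absurd h hp.2
    · exact h
  have hmatch' : IsMatching M' := fun p hp q hq hpq =>
    hM p (Finset.filter_subset _ _ hp) q (Finset.filter_subset _ _ hq) hpq
  have h1 : (M.filter (fun p => p.1 = a)).card ≤ 1 := by
    refine Finset.card_le_one.2 fun p hp q hq => ?_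
    rw [Finset.mem_filter] at hp hq
    by_contra hne
    exact (hM p hp.1 q hq.1 hne).1 (hp.2.trans hq.2.symm)
  have h2 := Finset.card_filter_add_card_filter_not (s := M) (p := fun p => p.1 = a)
  have h3 : M'.card = (M.filter (fun p => ¬ p.1 = a)).card := by rw [hM']
  have hle : M.card ≤ 1 + M'.card := by omega
  calc M.card ≤ 1 + M'.card := hle
    _ ≤ 1 + nu (patternOn S T) := by
        exact Nat.add_le_add_left (le_nu hM'sub hmatch') 1
    _ = nu (patternOn S T) + 1 := by omega

end NuAPI

section DetAPI
variable {m n : ℕ}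

/-- A matching of full column size yields a system of distinct row representatives. -/
lemma matching_to_fun {M : Finset (Fin m × Fin n)} (hM : IsMatching M) (hcard : M.card = n) :
    ∃ r : Fin n → Fin m, Function.Injective r ∧ ∀ k, (r k, k) ∈ M := by
  have hinj : Set.InjOn Prod.snd (M : Set (Fin m × Fin n)) := by
    intro p hp q hq hpq
    by_contra hne
    exact (hM p hp q hq hne).2 hpq
  have himg : M.image Prod.snd = Finset.univ := by
    apply Finset.eq_univ_of_card
    rw [Finset.card_image_of_injOn hinj, hcard, Fintype.card_fin]
  have hex : ∀ k : Fin n, ∃ p : Fin m × Fin n, p ∈ M ∧ p.2 = k := by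
    intro k
    have : k ∈ M.image Prod.snd := himg ▸ Finset.mem_univ k
    obtain ⟨p, hp, hpk⟩ := Finset.mem_image.1 this
    exact ⟨p, hp, hpk⟩
  choose p hpM hpk using hex
  refine ⟨fun k => (p k).1, ?_, ?_⟩
  · intro k k' hkk'
    have : p k = p k' := by
      by_contra hne
      exact (hM _ (hpM k) _ (hpM k') hne).1 hkk'
    rw [← hpk k, ← hpk k', this]
  · intro k
    have h1 : ((p k).1, (p k).2) ∈ M := by simpa using hpM k
    rwa [hpk k] at h1

/-- A system of distinct representatives with nonzero entries gives `n ≤ nu`. -/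
lemma le_nu_of_srd {S : Finset (Fin m × Fin n)} {T : Finset (Fin m)}
    (r : Fin n → Fin m) (hrinj : Function.Injective r) (c : Fin n → Fin n)
    (hcinj : Function.Injective c) (hrT : ∀ k, r k ∈ T) (hS : ∀ k, (r k, c k) ∈ S) :
    n ≤ nu (patternOn S T) := by
  set M := Finset.image (fun k => (r k, c k)) Finset.univ with hMdef
  have hcard : M.card = n := by
    rw [hMdef, Finset.card_image_of_injective _ (fun a b hab => hrinj (congrArg Prod.fst hab)),
      Finset.card_univ, Fintype.card_fin]
  have hsub : M ⊆ patternOn S T := by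
    intro q hq
    obtain ⟨k, -, rfl⟩ := Finset.mem_image.1 hq
    rw [patternOn, Finset.mem_filter]
    exact ⟨hS k, hrT k⟩
  have hmatch : IsMatching M := by
    rintro q hq q' hq' hne
    obtain ⟨k, -, rfl⟩ := Finset.mem_image.1 hq
    obtain ⟨k', -, rfl⟩ := Finset.mem_image.1 hq'
    have hkk' : k ≠ k' := fun h => hne (by rw [h])
    exact ⟨fun h => hkk' (hrinj h), fun h => hkk' (hcinj h)⟩
  calc n = M.card := hcard.symm
    _ ≤ nu (patternOn S T) := le_nu hsub hmatch

/-- A nonzero determinant yields a permutation with all entries nonzero. -/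
lemma exists_perm_of_det_ne_zero {n : ℕ} (B : Matrix (Fin n) (Fin n) ℝ) (h : B.det ≠ 0) :
    ∃ σ : Equiv.Perm (Fin n), ∀ i, B (σ i) i ≠ 0 := by
  by_contra hc
  push_neg at hc
  apply h
  rw [Matrix.det_apply]
  refine Finset.sum_eq_zero fun σ _ => ?_
  obtain ⟨i, hi⟩ := hc σ
  have hz : (∏ x, B (σ x) x) = 0 := Finset.prod_eq_zero (Finset.mem_univ i) hi
  rw [hz, smul_zero]

/-- If `mulVec` is injective then some `n × n` row-submatrix is invertible. -/
lemma exists_det_submatrix_ne_zero {m n : ℕ} (A : Matrix (Fin m) (Fin n) ℝ)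
    (h : Function.Injective A.mulVec) :
    ∃ r : Fin n → Fin m, Function.Injective r ∧ (A.submatrix r id).det ≠ 0 := by
  classical
  have hrank : A.rank = n := by
    have : Function.Injective A.mulVecLin := h
    rw [Matrix.rank, LinearMap.finrank_range_of_inj this, Module.finrank_pi, Fintype.card_fin]
  have hspan : Submodule.span ℝ (Set.range A) = ⊤ := by
    apply Submodule.eq_top_of_finrank_eq
    rw [Module.finrank_pi, Fintype.card_fin]
    exact (Matrix.rank_eq_finrank_span_row A).symm.trans hrank
  obtain ⟨b, hbsub, hbspan, hbind⟩ := exists_linearIndependent ℝ (Set.range A)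
  rw [hspan] at hbspan
  have hbfin : b.Finite := hbind.setFinite
  have hbfintype : Fintype b := hbfin.fintype
  have hbbasis : Module.Basis b ℝ (Fin n → ℝ) := Module.Basis.mk hbind (by rw [Subtype.range_coe, hbspan])
  have hbcard : Fintype.card b = n := by
    rw [← Module.finrank_eq_card_basis hbbasis, Module.finrank_pi, Fintype.card_fin]
  obtain ⟨e⟩ : Nonempty (Fin n ≃ b) := by
    rw [← Fintype.card_eq, hbcard, Fintype.card_fin]
  have hex : ∀ k : Fin n, ∃ i : Fin m, A i = (e k : Fin n → ℝ) := fun k => hbsub (e k).2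
  choose r hr using hex
  have hind : LinearIndependent ℝ (fun k => A (r k)) := by
    have : (fun k => A (r k)) = (fun x : b => (x : Fin n → ℝ)) ∘ e := by
      funext k; rw [hr k]; rfl
    rw [this]
    exact hbind.comp e e.injective
  have hinjfam : Function.Injective (fun k => A (r k)) := hind.injective
  have hrinj : Function.Injective r := fun k k' hkk' => hinjfam (by simp [hkk'])
  refine ⟨r, hrinj, ?_⟩
  have hunit : IsUnit (A.submatrix r id) := by
    rw [← Matrix.linearIndependent_rows_iff_isUnit]
    exact hind
  exact ((Matrix.isUnit_iff_isUnit_det _).1 hunit).ne_zero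

lemma exists_kernel_vec {m n : ℕ} (A : Matrix (Fin m) (Fin n) ℝ)
    (h : ∀ r : Fin n → Fin m, Function.Injective r → (A.submatrix r id).det = 0) :
    ∃ x : Fin n → ℝ, x ≠ 0 ∧ A.mulVec x = 0 := by
  by_cases hinj : Function.Injective A.mulVec
  · obtain ⟨r, hrinj, hdet⟩ := exists_det_submatrix_ne_zero A hinj
    exact absurd (h r hrinj) hdet
  · rw [Function.not_injective_iff] at hinj
    obtain ⟨x, y, hxy, hne⟩ := hinj
    refine ⟨x - y, sub_ne_zero.2 hne, ?_⟩
    rw [Matrix.mulVec_sub, hxy, sub_self]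

end DetAPI

section Generic
variable {m n : ℕ}

/-- The generic (polynomial) matrix with pattern `S`. -/
noncomputable def genMat (S : Finset (Fin m × Fin n)) :
    Matrix (Fin m) (Fin n) (MvPolynomial (Fin m × Fin n) ℝ) :=
  Matrix.of fun i j => if (i, j) ∈ S then MvPolynomial.X (i, j) else 0

lemma genMat_det_ne_zero (S : Finset (Fin m × Fin n)) (r : Fin n → Fin m)
    (hrinj : Function.Injective r) (hrS : ∀ k, (r k, k) ∈ S) :
    ((genMat S).submatrix r id).det ≠ 0 := by
  classical
  set v : Fin m × Fin n → ℝ := fun p => if ∃ k, p = (r k, k) then 1 else 0 with hv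
  intro hdet
  have heval : MvPolynomial.eval v ((genMat S).submatrix r id).det = 0 := by
    rw [hdet, map_zero]
  rw [RingHom.map_det, RingHom.mapMatrix_apply] at heval
  have hmat : ((genMat S).submatrix r id).map (MvPolynomial.eval v) = 1 := by
    ext k l
    simp only [Matrix.map_apply, Matrix.submatrix_apply, genMat, Matrix.of_apply, id]
    by_cases hkl : l = k
    · subst hkl
      rw [if_pos (hrS l), MvPolynomial.eval_X]
      show (if ∃ k', ((r l, l) : Fin m × Fin n) = (r k', k') then (1:ℝ) else 0) = _
      rw [if_pos ⟨l, rfl⟩, Matrix.one_apply_eq]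
    · rw [Matrix.one_apply_ne' (by exact fun h => hkl (by exact_mod_cast h))]
      by_cases hS : (r k, l) ∈ S
      · rw [if_pos hS, MvPolynomial.eval_X]
        show (if ∃ k', ((r k, l) : Fin m × Fin n) = (r k', k') then (1:ℝ) else 0) = 0
        rw [if_neg]
        rintro ⟨k', hk'⟩
        have h1 : r k = r k' := congrArg Prod.fst hk'
        have h2 : l = k' := congrArg Prod.snd hk'
        exact hkl (h2.trans (hrinj h1).symm)
      · rw [if_neg hS, map_zero]
  rw [hmat, Matrix.det_one] at heval
  exact one_ne_zero heval

/-- A matrix with pattern `S` which is generic: every row set carrying a full matching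
supports an invertible `n × n` submatrix. -/
lemma exists_generic (S : Finset (Fin m × Fin n)) :
    ∃ A : Matrix (Fin m) (Fin n) ℝ, HasPattern S A ∧
      ∀ T : Finset (Fin m), n ≤ nu (patternOn S T) →
        ∃ r : Fin n → Fin m, (∀ k, r k ∈ T) ∧ (A.submatrix r id).det ≠ 0 := by
  classical
  set 𝒯 : Finset (Finset (Fin m)) :=
    Finset.univ.filter (fun T => n ≤ nu (patternOn S T)) with h𝒯
  have hrT : ∀ T : {T : Finset (Fin m) // T ∈ 𝒯}, ∃ r : Fin n → Fin m,
      Function.Injective r ∧ (∀ k, r k ∈ T.1) ∧ (∀ k, (r k, k) ∈ S) := by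
    rintro ⟨T, hT⟩
    rw [h𝒯, Finset.mem_filter] at hT
    obtain ⟨M, hMS, hM, hcard⟩ := nu_spec (patternOn S T)
    obtain ⟨M', hM'M, hM'card⟩ := Finset.exists_subset_card_eq (hcard.symm ▸ hT.2)
    have hM' : IsMatching M' := fun p hp q hq hpq => hM p (hM'M hp) q (hM'M hq) hpq
    obtain ⟨r, hrinj, hr⟩ := matching_to_fun hM' hM'card
    refine ⟨r, hrinj, fun k => ?_, fun k => ?_⟩
    · have := hMS (hM'M (hr k))
      rw [patternOn, Finset.mem_filter] at this
      exact this.2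
    · have := hMS (hM'M (hr k))
      rw [patternOn, Finset.mem_filter] at this
      exact this.1
  choose r hrinj hrmem hrS using hrT
  set P : MvPolynomial (Fin m × Fin n) ℝ :=
    (∏ p ∈ S, MvPolynomial.X p) *
      ∏ T ∈ 𝒯.attach, ((genMat S).submatrix (r T) id).det with hP
  have hPne : P ≠ 0 := by
    apply mul_ne_zero
    · exact Finset.prod_ne_zero_iff.2 fun p _ => MvPolynomial.X_ne_zero p
    · exact Finset.prod_ne_zero_iff.2 fun T _ =>
        genMat_det_ne_zero S (r T) (hrinj T) (hrS T)
  obtain ⟨v, hv⟩ : ∃ v : Fin m × Fin n → ℝ, MvPolynomial.eval v P ≠ 0 := by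
    by_contra hc
    push_neg at hc
    exact hPne (MvPolynomial.funext fun x => by rw [hc x, map_zero])
  set A : Matrix (Fin m) (Fin n) ℝ := ((genMat S).map (MvPolynomial.eval v)) with hA
  have hfactor1 : MvPolynomial.eval v (∏ p ∈ S, MvPolynomial.X p) ≠ 0 := by
    intro h; apply hv; rw [hP, _root_.map_mul, h, zero_mul]
  have hfactor2 : ∀ T : {T : Finset (Fin m) // T ∈ 𝒯},
      MvPolynomial.eval v (((genMat S).submatrix (r T) id).det) ≠ 0 := by
    intro T h
    apply hv
    rw [hP, _root_.map_mul]
    refine mul_eq_zero_of_right _ ?_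
    rw [_root_.map_prod]
    exact Finset.prod_eq_zero (Finset.mem_attach _ T) h
  refine ⟨A, ?_, ?_⟩
  · intro i j
    rw [hA]
    simp only [Matrix.map_apply, genMat, Matrix.of_apply]
    by_cases hS : (i, j) ∈ S
    · rw [if_pos hS, MvPolynomial.eval_X]
      refine ⟨fun _ => hS, fun _ => ?_⟩
      rw [_root_.map_prod] at hfactor1
      have := Finset.prod_ne_zero_iff.1 hfactor1 (i, j) hS
      rwa [MvPolynomial.eval_X] at this
    · rw [if_neg hS, map_zero]
      simp [hS]
  · intro T hT
    have hTmem : T ∈ 𝒯 := by rw [h𝒯, Finset.mem_filter]; exact ⟨Finset.mem_univ T, hT⟩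
    refine ⟨r ⟨T, hTmem⟩, hrmem ⟨T, hTmem⟩, ?_⟩
    have : (A.submatrix (r ⟨T, hTmem⟩) id).det =
        MvPolynomial.eval v (((genMat S).submatrix (r ⟨T, hTmem⟩) id).det) := by
      rw [RingHom.map_det, RingHom.mapMatrix_apply, hA, Matrix.submatrix_map]
    rw [this]
    exact hfactor2 ⟨T, hTmem⟩

end Generic

section Main
variable {m n : ℕ}

lemma l0_add_card (y : Fin m → ℝ) :
    l0 y + (Finset.univ.filter (fun i => y i = 0)).card = m := by
  have h := Finset.card_filter_add_card_filter_not
    (s := (Finset.univ : Finset (Fin m))) (p := fun i => y i = 0)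
  rw [Finset.card_univ, Fintype.card_fin] at h
  rw [l0]
  have h2 : (Finset.univ.filter (fun i => y i ≠ 0)).card
      = (Finset.univ.filter (fun i => ¬ y i = 0)).card := rfl
  omega

lemma patternOn_mono (S : Finset (Fin m × Fin n)) {T T' : Finset (Fin m)} (h : T ⊆ T') :
    patternOn S T ⊆ patternOn S T' := by
  intro p hp
  rw [patternOn, Finset.mem_filter] at hp ⊢
  exact ⟨hp.1, h hp.2⟩

/-- Growth lemma: any row set with deficient matching number is no larger than `OPT`. -/
lemma grow {S : Finset (Fin m × Fin n)} {OPT : Finset (Fin m)}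
    (hOPT : nu (patternOn S OPT) = n - 1)
    (hmax : ∀ T : Finset (Fin m), nu (patternOn S T) = n - 1 → T.card ≤ OPT.card) :
    ∀ (k : ℕ) (Z : Finset (Fin m)), (Finset.univ \ Z).card ≤ k →
      nu (patternOn S Z) ≤ n - 1 → Z.card ≤ OPT.card := by
  intro k
  induction k with
  | zero =>
    intro Z hZ hnu
    have hZuniv : Z = Finset.univ := by
      have : Finset.univ \ Z = ∅ := Finset.card_eq_zero.1 (Nat.le_zero.1 hZ)
      have h2 := Finset.sdiff_eq_empty_iff_subset.1 this
      exact Finset.univ_subset_iff.1 h2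
    have h3 : n - 1 ≤ nu (patternOn S Z) := by
      rw [← hOPT]
      exact nu_mono (patternOn_mono S (hZuniv ▸ Finset.subset_univ OPT))
    exact hmax Z (le_antisymm hnu h3)
  | succ k ih =>
    intro Z hZ hnu
    by_cases heq : nu (patternOn S Z) = n - 1
    · exact hmax Z heq
    · have hlt : nu (patternOn S Z) < n - 1 := lt_of_le_of_ne hnu heq
      have hZne : Z ≠ Finset.univ := by
        intro hZuniv
        have h3 : n - 1 ≤ nu (patternOn S Z) := by
          rw [← hOPT]
          exact nu_mono (patternOn_mono S (hZuniv ▸ Finset.subset_univ OPT))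
        omega
      obtain ⟨a, ha⟩ : ∃ a, a ∉ Z := by
        by_contra hc
        push_neg at hc
        exact hZne (Finset.eq_univ_of_forall hc)
      have h1 : nu (patternOn S (insert a Z)) ≤ n - 1 := by
        have := nu_insert_row S Z a
        omega
      have h2 : (Finset.univ \ insert a Z).card ≤ k := by
        have hins : Finset.univ \ insert a Z = (Finset.univ \ Z).erase a := by
          ext b
          simp only [Finset.mem_sdiff, Finset.mem_insert, Finset.mem_erase, Finset.mem_univ,
            true_and]
          tauto
        have hamem : a ∈ Finset.univ \ Z := by
          rw [Finset.mem_sdiff]; exact ⟨Finset.mem_univ a, ha⟩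
        rw [hins, Finset.card_erase_of_mem hamem]
        have : 1 ≤ (Finset.univ \ Z).card := Finset.card_pos.2 ⟨a, hamem⟩
        omega
      have h3 := ih (insert a Z) h2 h1
      calc Z.card ≤ (insert a Z).card := Finset.card_le_card (Finset.subset_insert a Z)
        _ ≤ OPT.card := h3

/-- Upper bound: every matrix with pattern `S` has cospark at most `m - |OPT|`. -/
lemma cospark_le_bound (hn : 1 ≤ n) {S : Finset (Fin m × Fin n)} {OPT : Finset (Fin m)}
    (hOPT : nu (patternOn S OPT) = n - 1) (A : Matrix (Fin m) (Fin n) ℝ)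
    (hA : HasPattern S A) : cospark A ≤ m - OPT.card := by
  have hdet : ∀ r : Fin n → Fin m, Function.Injective r →
      ((rowRestrict A OPT).submatrix r id).det = 0 := by
    intro r hrinj
    by_contra hd
    obtain ⟨σ, hσ⟩ := exists_perm_of_det_ne_zero _ hd
    have hmem : ∀ i, r (σ i) ∈ OPT ∧ (r (σ i), i) ∈ S := by
      intro i
      have h := hσ i
      simp only [Matrix.submatrix_apply, rowRestrict, Matrix.of_apply, id] at h
      by_cases hi : r (σ i) ∈ OPT
      · rw [if_pos hi] at h
        exact ⟨hi, (hA _ _).1 h⟩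
      · rw [if_neg hi] at h
        exact absurd rfl h
    have hle := le_nu_of_srd (fun i => r (σ i)) (hrinj.comp σ.injective) id
      Function.injective_id (fun i => (hmem i).1) (fun i => (hmem i).2)
    rw [hOPT] at hle
    omega
  obtain ⟨x, hx0, hxker⟩ := exists_kernel_vec _ hdet
  have hzero : ∀ i ∈ OPT, (A *ᵥ x) i = 0 := by
    intro i hi
    have h2 : (rowRestrict A OPT *ᵥ x) i = (A *ᵥ x) i := by
      simp [Matrix.mulVec, dotProduct, rowRestrict, hi]
    rw [← h2, hxker, Pi.zero_apply]
  have hl0 : l0 (A *ᵥ x) ≤ m - OPT.card := by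
    have hsub : Finset.univ.filter (fun i => (A *ᵥ x) i ≠ 0) ⊆ Finset.univ \ OPT := by
      intro i hi
      rw [Finset.mem_filter] at hi
      rw [Finset.mem_sdiff]
      exact ⟨Finset.mem_univ i, fun hmem => hi.2 (hzero i hmem)⟩
    calc l0 (A *ᵥ x) ≤ (Finset.univ \ OPT).card := Finset.card_le_card hsub
      _ = m - OPT.card := by
          rw [Finset.card_sdiff_of_subset (Finset.subset_univ OPT), Finset.card_univ, Fintype.card_fin]
  exact le_trans (Nat.sInf_le ⟨x, hx0, rfl⟩) hl0

end Main

section Final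
variable {m n : ℕ}

lemma cospark_set_nonempty (hn : 1 ≤ n) (A : Matrix (Fin m) (Fin n) ℝ) :
    {k : ℕ | ∃ x : Fin n → ℝ, x ≠ 0 ∧ l0 (A.mulVec x) = k}.Nonempty := by
  refine ⟨l0 (A.mulVec (fun _ => 1)), fun _ => 1, ?_, rfl⟩
  intro h
  have := congrFun h ⟨0, hn⟩
  simp at this

/-- Lower bound for the generic matrix. -/
lemma bound_le_cospark (hn : 1 ≤ n) {S : Finset (Fin m × Fin n)} {OPT : Finset (Fin m)}
    (hOPT : nu (patternOn S OPT) = n - 1)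
    (hmax : ∀ T : Finset (Fin m), nu (patternOn S T) = n - 1 → T.card ≤ OPT.card)
    (A : Matrix (Fin m) (Fin n) ℝ)
    (hgen : ∀ T : Finset (Fin m), n ≤ nu (patternOn S T) →
      ∃ r : Fin n → Fin m, (∀ k, r k ∈ T) ∧ (A.submatrix r id).det ≠ 0) :
    m - OPT.card ≤ cospark A := by
  refine le_csInf (cospark_set_nonempty hn A) ?_
  rintro k ⟨x, hx0, rfl⟩
  classical
  set Z : Finset (Fin m) := Finset.univ.filter (fun i => (A *ᵥ x) i = 0) with hZ
  have hnuZ : nu (patternOn S Z) ≤ n - 1 := by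
    by_contra h
    push_neg at h
    obtain ⟨r, hrZ, hdet⟩ := hgen Z (by omega)
    have hker : (A.submatrix r id) *ᵥ x = 0 := by
      funext k'
      have hz : (A *ᵥ x) (r k') = 0 := by
        have := hrZ k'
        rw [hZ, Finset.mem_filter] at this
        exact this.2
      calc (A.submatrix r id *ᵥ x) k' = (A *ᵥ x) (r k') := by
            simp [Matrix.mulVec, dotProduct]
        _ = 0 := hz
    have hunit : IsUnit (A.submatrix r id) :=
      (Matrix.isUnit_iff_isUnit_det _).2 hdet.isUnit
    have hinj := Matrix.mulVec_injective_iff_isUnit.2 hunit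
    apply hx0
    apply hinj
    rw [hker, Matrix.mulVec_zero]
  have hZcard : Z.card ≤ OPT.card :=
    grow hOPT hmax (Finset.univ \ Z).card Z le_rfl hnuZ
  have hl0 := l0_add_card (A *ᵥ x)
  rw [← hZ] at hl0
  omega

theorem stmt5' (hn : 1 ≤ n) (S : Finset (Fin m × Fin n)) (OPT : Finset (Fin m))
    (hOPT : nu (patternOn S OPT) = n - 1)
    (hmax : ∀ T : Finset (Fin m), nu (patternOn S T) = n - 1 → T.card ≤ OPT.card) :
    spcospark S = m - OPT.card := by
  obtain ⟨A, hApat, hAgen⟩ := exists_generic S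
  have hAcospark : cospark A = m - OPT.card :=
    le_antisymm (cospark_le_bound hn hOPT A hApat)
      (bound_le_cospark hn hOPT hmax A hAgen)
  have hmem : (m - OPT.card) ∈
      {k : ℕ | ∃ A : Matrix (Fin m) (Fin n) ℝ, HasPattern S A ∧ cospark A = k} :=
    ⟨A, hApat, hAcospark⟩
  refine le_antisymm ?_ ?_
  · refine csSup_le ⟨_, hmem⟩ ?_
    rintro k ⟨A', hA'pat, rfl⟩
    exact cospark_le_bound hn hOPT A' hA'pat
  · refine le_csSup ⟨m - OPT.card, ?_⟩ hmem
    rintro k ⟨A', hA'pat, rfl⟩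
    exact cospark_le_bound hn hOPT A' hA'pat

end Final

/-- if `sprank S = n` and `OPT` is a set of rows of maximum cardinality with
`ν(S_OPT) = n - 1`, then `spcospark S = m - |OPT|`. -/
theorem stmt5 {m n : ℕ} (hn : 1 ≤ n) (hmn : n < m) (S : Finset (Fin m × Fin n))
    (hspr : sprank S = n) (OPT : Finset (Fin m))
    (hOPT : nu (patternOn S OPT) = n - 1)
    (hmax : ∀ T : Finset (Fin m), nu (patternOn S T) = n - 1 → T.card ≤ OPT.card) :
    spcospark S = m - OPT.card :=
  stmt5' hn S OPT hOPT hmax
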